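/- MAX SMTI admits a man-strategy-proof 2-approximate-stable mechanism: there exists a mechanism S such that for every SMTI instance I, S(I) is a stable matching with 2·|S(I)| ≥ |M_opt| for every stable matching M_opt of I, and no man can, by submitting a falsified preference list while all other lists are unchanged, obtain an outcome he prefers with respect to his true list. -/

import Mathlib

/-- An instance of the stable marriage problem with ties and incomplete lists (SMTI),
with men of type `α` and women of type `β`.  Each person's preference list is
represented by a rank function: `mpref m w = none` means woman `w` is unacceptable
to man `m`, and `mpref m w = some r` means `w` is acceptable with rank `r`
(smaller rank = more preferred; equal ranks = a tie).  This encodes exactly a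
total preorder on the set of acceptable partners. -/
structure SMInst (α β : Type) where
  mpref : α → β → Option ℕ
  wpref : β → α → Option ℕ

namespace SMInst

variable {α β : Type}

/-- Woman `w` is acceptable to man `m`. -/
def mAcc (I : SMInst α β) (m : α) (w : β) : Prop := (I.mpref m w).isSome

/-- Man `m` is acceptable to woman `w`. -/
def wAcc (I : SMInst α β) (w : β) (m : α) : Prop := (I.wpref w m).isSome

/-- Man `m` strictly prefers woman `w` to woman `w'`. -/
def mPref (I : SMInst α β) (m : α) (w w' : β) : Prop :=
  ∃ r r', I.mpref m w = some r ∧ I.mpref m w' = some r' ∧ r < r'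

/-- Woman `w` strictly prefers man `m` to man `m'`. -/
def wPref (I : SMInst α β) (w : β) (m m' : α) : Prop :=
  ∃ r r', I.wpref w m = some r ∧ I.wpref w m' = some r' ∧ r < r'

/-- `M` is a matching of `I`: all pairs mutually acceptable and no person in two pairs. -/
def IsMatching (I : SMInst α β) (M : Finset (α × β)) : Prop :=
  (∀ p ∈ M, I.mAcc p.1 p.2 ∧ I.wAcc p.2 p.1) ∧
  (∀ p ∈ M, ∀ q ∈ M, p.1 = q.1 → p = q) ∧
  (∀ p ∈ M, ∀ q ∈ M, p.2 = q.2 → p = q)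

/-- Man `m` is single (unmatched) in `M`. -/
def mSingle (M : Finset (α × β)) (m : α) : Prop := ∀ w, (m, w) ∉ M

/-- Woman `w` is single (unmatched) in `M`. -/
def wSingle (M : Finset (α × β)) (w : β) : Prop := ∀ m, (m, w) ∉ M

/-- `(m, w)` blocks `M` in instance `I`. -/
def Blocks (I : SMInst α β) (M : Finset (α × β)) (m : α) (w : β) : Prop :=
  I.mAcc m w ∧ I.wAcc w m ∧
  (mSingle M m ∨ ∃ w', (m, w') ∈ M ∧ I.mPref m w w') ∧
  (wSingle M w ∨ ∃ m', (m', w) ∈ M ∧ I.wPref w m m')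

/-- `M` is a (weakly) stable matching of `I`. -/
def IsStable (I : SMInst α β) (M : Finset (α × β)) : Prop :=
  I.IsMatching M ∧ ∀ m w, ¬ I.Blocks M m w

/-- Man `m` prefers matching `M'` to matching `M`, with respect to his list in `I`:
he is matched in `M'` to an acceptable partner, and he is either single in `M`
or strictly prefers his `M'`-partner to his `M`-partner. -/
def mPrefMatching (I : SMInst α β) (m : α) (M' M : Finset (α × β)) : Prop :=
  ∃ w, (m, w) ∈ M' ∧ I.mAcc m w ∧
    (mSingle M m ∨ ∃ w', (m, w') ∈ M ∧ I.mPref m w w')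

/-- Woman `w` prefers matching `M'` to matching `M`, with respect to her list in `I`. -/
def wPrefMatching (I : SMInst α β) (w : β) (M' M : Finset (α × β)) : Prop :=
  ∃ m, (m, w) ∈ M' ∧ I.wAcc w m ∧
    (wSingle M w ∨ ∃ m', (m', w) ∈ M ∧ I.wPref w m m')

/-- `I` and `I'` differ only in man `m`'s preference list. -/
def mDiffOnly (I I' : SMInst α β) (m : α) : Prop :=
  I.wpref = I'.wpref ∧ ∀ m', m' ≠ m → I.mpref m' = I'.mpref m'

/-- `I` and `I'` differ only in woman `w`'s preference list. -/
def wDiffOnly (I I' : SMInst α β) (w : β) : Prop :=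
  I.mpref = I'.mpref ∧ ∀ w', w' ≠ w → I.wpref w' = I'.wpref w'

/-- Men's lists contain no ties. -/
def MStrict (I : SMInst α β) : Prop :=
  ∀ m w w', I.mpref m w = I.mpref m w' → I.mAcc m w → w = w'

/-- Women's lists contain no ties. -/
def WStrict (I : SMInst α β) : Prop :=
  ∀ w m m', I.wpref w m = I.wpref w m' → I.wAcc w m → m = m'

/-- `I` is an SMI instance: no ties at all (all lists strictly ordered). -/
def NoTies (I : SMInst α β) : Prop := I.MStrict ∧ I.WStrict

/-- `I` is an SMTI-1TM instance: ties may occur only in men's lists,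
i.e. women's lists are strictly ordered. -/
def OneTM (I : SMInst α β) : Prop := I.WStrict

/-- `I'` is obtained from `I` by breaking ties: same acceptable sets, and every
strict preference of `I` is preserved in `I'` (so each person's list in `I'` is a
linear extension of the corresponding total preorder in `I`). -/
def Refines (I I' : SMInst α β) : Prop :=
  (∀ m w, I.mAcc m w ↔ I'.mAcc m w) ∧
  (∀ w m, I.wAcc w m ↔ I'.wAcc w m) ∧
  (∀ m w w', I.mPref m w w' → I'.mPref m w w') ∧
  (∀ w m m', I.wPref w m m' → I'.wPref w m m')

end SMInst

namespace DAproof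

open SMInst Finset

attribute [local instance] Classical.propDecidable

variable {n : ℕ}

/-- man rank -/
def rk (J : SMInst (Fin n) (Fin n)) (m w : Fin n) : ℕ := (J.mpref m w).getD 0
/-- woman rank -/
def wrk (J : SMInst (Fin n) (Fin n)) (w m : Fin n) : ℕ := (J.wpref w m).getD 0

lemma mAcc_iff {J : SMInst (Fin n) (Fin n)} {m w : Fin n} :
    J.mAcc m w ↔ ∃ r, J.mpref m w = some r := Option.isSome_iff_exists

lemma wAcc_iff {J : SMInst (Fin n) (Fin n)} {w m : Fin n} :
    J.wAcc w m ↔ ∃ r, J.wpref w m = some r := Option.isSome_iff_exists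

lemma mpref_eq_rk {J : SMInst (Fin n) (Fin n)} {m w : Fin n} (h : J.mAcc m w) :
    J.mpref m w = some (rk J m w) := by
  rcases mAcc_iff.1 h with ⟨r, hr⟩; simp [rk, hr]

lemma wpref_eq_wrk {J : SMInst (Fin n) (Fin n)} {w m : Fin n} (h : J.wAcc w m) :
    J.wpref w m = some (wrk J w m) := by
  rcases wAcc_iff.1 h with ⟨r, hr⟩; simp [wrk, hr]

lemma mPref_of_rk {J : SMInst (Fin n) (Fin n)} {m a b : Fin n}
    (ha : J.mAcc m a) (hb : J.mAcc m b) (h : rk J m a < rk J m b) : J.mPref m a b :=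
  ⟨_, _, mpref_eq_rk ha, mpref_eq_rk hb, h⟩

lemma rk_lt_of_mPref {J : SMInst (Fin n) (Fin n)} {m a b : Fin n}
    (h : J.mPref m a b) : rk J m a < rk J m b := by
  rcases h with ⟨r, r', h1, h2, h3⟩; simp [rk, h1, h2]; exact h3

lemma mPref_acc {J : SMInst (Fin n) (Fin n)} {m a b : Fin n} (h : J.mPref m a b) :
    J.mAcc m a ∧ J.mAcc m b := by
  rcases h with ⟨r, r', h1, h2, _⟩
  exact ⟨mAcc_iff.2 ⟨r, h1⟩, mAcc_iff.2 ⟨r', h2⟩⟩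

lemma wPref_of_wrk {J : SMInst (Fin n) (Fin n)} {w a b : Fin n}
    (ha : J.wAcc w a) (hb : J.wAcc w b) (h : wrk J w a < wrk J w b) : J.wPref w a b :=
  ⟨_, _, wpref_eq_wrk ha, wpref_eq_wrk hb, h⟩

lemma wrk_lt_of_wPref {J : SMInst (Fin n) (Fin n)} {w a b : Fin n}
    (h : J.wPref w a b) : wrk J w a < wrk J w b := by
  rcases h with ⟨r, r', h1, h2, h3⟩; simp [wrk, h1, h2]; exact h3

lemma wPref_acc {J : SMInst (Fin n) (Fin n)} {w a b : Fin n} (h : J.wPref w a b) :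
    J.wAcc w a ∧ J.wAcc w b := by
  rcases h with ⟨r, r', h1, h2, _⟩
  exact ⟨wAcc_iff.2 ⟨r, h1⟩, wAcc_iff.2 ⟨r', h2⟩⟩

lemma mPref_irrefl {J : SMInst (Fin n) (Fin n)} {m a : Fin n} : ¬ J.mPref m a a := by
  intro h; exact absurd (rk_lt_of_mPref h) (lt_irrefl _)

lemma wPref_irrefl {J : SMInst (Fin n) (Fin n)} {w a : Fin n} : ¬ J.wPref w a a := by
  intro h; exact absurd (wrk_lt_of_wPref h) (lt_irrefl _)

lemma wPref_trans {J : SMInst (Fin n) (Fin n)} {w a b c : Fin n}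
    (h1 : J.wPref w a b) (h2 : J.wPref w b c) : J.wPref w a c :=
  wPref_of_wrk (wPref_acc h1).1 (wPref_acc h2).2
    (lt_trans (wrk_lt_of_wPref h1) (wrk_lt_of_wPref h2))

lemma mPref_trans {J : SMInst (Fin n) (Fin n)} {m a b c : Fin n}
    (h1 : J.mPref m a b) (h2 : J.mPref m b c) : J.mPref m a c :=
  mPref_of_rk (mPref_acc h1).1 (mPref_acc h2).2
    (lt_trans (rk_lt_of_mPref h1) (rk_lt_of_mPref h2))

lemma rk_inj {J : SMInst (Fin n) (Fin n)} (hM : J.MStrict) {m a b : Fin n}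
    (ha : J.mAcc m a) (hb : J.mAcc m b) (h : rk J m a = rk J m b) : a = b := by
  apply hM m a b _ ha
  rw [mpref_eq_rk ha, mpref_eq_rk hb, h]

lemma wrk_inj {J : SMInst (Fin n) (Fin n)} (hW : J.WStrict) {w a b : Fin n}
    (ha : J.wAcc w a) (hb : J.wAcc w b) (h : wrk J w a = wrk J w b) : a = b := by
  apply hW w a b _ ha
  rw [wpref_eq_wrk ha, wpref_eq_wrk hb, h]

/-- candidate women for `m` given rejection set `R` -/
noncomputable def Cand (J : SMInst (Fin n) (Fin n)) (m : Fin n) (R : Finset (Fin n × Fin n)) :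
    Finset (Fin n) := Finset.univ.filter fun w => J.mAcc m w ∧ (m, w) ∉ R

lemma mem_Cand {J : SMInst (Fin n) (Fin n)} {m w : Fin n} {R : Finset (Fin n × Fin n)} :
    w ∈ Cand J m R ↔ J.mAcc m w ∧ (m, w) ∉ R := by simp [Cand]

lemma Cand_anti {J : SMInst (Fin n) (Fin n)} {m : Fin n} {R R' : Finset (Fin n × Fin n)}
    (h : R ⊆ R') : Cand J m R' ⊆ Cand J m R := by
  intro w hw; rw [mem_Cand] at hw ⊢; exact ⟨hw.1, fun hc => hw.2 (h hc)⟩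

/-- the proposal pointer of man `m`: his most preferred non-rejected acceptable woman -/
noncomputable def prop (J : SMInst (Fin n) (Fin n)) (m : Fin n)
    (R : Finset (Fin n × Fin n)) : Option (Fin n) :=
  if h : ∃ w, w ∈ Cand J m R ∧ ∀ w' ∈ Cand J m R, rk J m w ≤ rk J m w'
  then some h.choose else none

lemma prop_spec {J : SMInst (Fin n) (Fin n)} {m w : Fin n} {R : Finset (Fin n × Fin n)}
    (h : prop J m R = some w) :
    w ∈ Cand J m R ∧ ∀ w' ∈ Cand J m R, rk J m w ≤ rk J m w' := by
  unfold prop at h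
  split_ifs at h with hh
  cases h
  exact hh.choose_spec

lemma prop_isSome {J : SMInst (Fin n) (Fin n)} {m : Fin n} {R : Finset (Fin n × Fin n)}
    (h : (Cand J m R).Nonempty) : ∃ w, prop J m R = some w := by
  obtain ⟨b, hb, hmin⟩ := Finset.exists_min_image (Cand J m R) (rk J m) h
  have hex : ∃ w, w ∈ Cand J m R ∧ ∀ w' ∈ Cand J m R, rk J m w ≤ rk J m w' := ⟨b, hb, hmin⟩
  exact ⟨hex.choose, by simp [prop, dif_pos hex]⟩

lemma prop_none {J : SMInst (Fin n) (Fin n)} {m w : Fin n} {R : Finset (Fin n × Fin n)}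
    (h : prop J m R = none) (hacc : J.mAcc m w) : (m, w) ∈ R := by
  by_contra hc
  obtain ⟨w', hw'⟩ := prop_isSome (⟨w, mem_Cand.2 ⟨hacc, hc⟩⟩ : (Cand J m R).Nonempty)
  rw [hw'] at h; cases h

lemma prop_acc {J : SMInst (Fin n) (Fin n)} {m w : Fin n} {R : Finset (Fin n × Fin n)}
    (h : prop J m R = some w) : J.mAcc m w ∧ (m, w) ∉ R :=
  mem_Cand.1 (prop_spec h).1

lemma prop_unique {J : SMInst (Fin n) (Fin n)} (hM : J.MStrict) {m w w' : Fin n}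
    {R : Finset (Fin n × Fin n)} (h : prop J m R = some w)
    (hw' : w' ∈ Cand J m R) (hmin : ∀ w'' ∈ Cand J m R, rk J m w' ≤ rk J m w'') :
    w = w' := by
  obtain ⟨hmem, hmin'⟩ := prop_spec h
  exact rk_inj hM (mem_Cand.1 hmem).1 (mem_Cand.1 hw').1
    (le_antisymm (hmin' w' hw') (hmin w hmem))

lemma prop_persist {J : SMInst (Fin n) (Fin n)} (hM : J.MStrict) {m w : Fin n}
    {R R' : Finset (Fin n × Fin n)} (hRR' : R ⊆ R') (h : prop J m R = some w)
    (hw : (m, w) ∉ R') : prop J m R' = some w := by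
  obtain ⟨hmem, hmin⟩ := prop_spec h
  have hw' : w ∈ Cand J m R' := mem_Cand.2 ⟨(mem_Cand.1 hmem).1, hw⟩
  have hmin' : ∀ w'' ∈ Cand J m R', rk J m w ≤ rk J m w'' :=
    fun w'' hw'' => hmin w'' (Cand_anti hRR' hw'')
  obtain ⟨u, hu⟩ := prop_isSome ⟨w, hw'⟩
  rw [hu, prop_unique hM hu hw' hmin']

lemma prop_none_mono {J : SMInst (Fin n) (Fin n)} {m : Fin n}
    {R R' : Finset (Fin n × Fin n)} (hRR' : R ⊆ R') (h : prop J m R = none) :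
    prop J m R' = none := by
  cases hp : prop J m R' with
  | none => rfl
  | some u =>
    have := (prop_spec hp).1
    obtain ⟨w', hw'⟩ := prop_isSome ⟨u, Cand_anti hRR' this⟩
    rw [hw'] at h; cases h

lemma prop_rank_mono {J : SMInst (Fin n) (Fin n)} {m a a' : Fin n}
    {R R' : Finset (Fin n × Fin n)} (hRR' : R ⊆ R') (h : prop J m R = some a)
    (h' : prop J m R' = some a') : rk J m a ≤ rk J m a' :=
  (prop_spec h).2 a' (Cand_anti hRR' (prop_spec h').1)

/-- applicable rejections -/
noncomputable def appl (J : SMInst (Fin n) (Fin n)) (R : Finset (Fin n × Fin n)) :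
    Finset (Fin n × Fin n) :=
  Finset.univ.filter fun p => prop J p.1 R = some p.2 ∧
    (¬ J.wAcc p.2 p.1 ∨ ∃ m', prop J m' R = some p.2 ∧ J.wPref p.2 m' p.1)

lemma mem_appl {J : SMInst (Fin n) (Fin n)} {p : Fin n × Fin n} {R : Finset (Fin n × Fin n)} :
    p ∈ appl J R ↔ prop J p.1 R = some p.2 ∧
      (¬ J.wAcc p.2 p.1 ∨ ∃ m', prop J m' R = some p.2 ∧ J.wPref p.2 m' p.1) := by
  simp [appl]

noncomputable def step (J : SMInst (Fin n) (Fin n)) (R : Finset (Fin n × Fin n)) :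
    Finset (Fin n × Fin n) :=
  if h : (appl J R).Nonempty then insert h.choose R else R

lemma step_sub {J : SMInst (Fin n) (Fin n)} {R : Finset (Fin n × Fin n)} :
    R ⊆ step J R := by
  unfold step; split_ifs with h
  · exact Finset.subset_insert _ _
  · exact Finset.Subset.refl _

lemma step_cases (J : SMInst (Fin n) (Fin n)) (R : Finset (Fin n × Fin n)) :
    (step J R = R ∧ appl J R = ∅) ∨
    ∃ p, p ∈ appl J R ∧ p ∉ R ∧ step J R = insert p R := by
  unfold step; split_ifs with h
  · refine Or.inr ⟨h.choose, h.choose_spec, ?_, rfl⟩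
    have := (mem_appl.1 h.choose_spec).1
    exact (prop_acc this).2
  · exact Or.inl ⟨rfl, Finset.not_nonempty_iff_eq_empty.1 h⟩

lemma step_of_empty {J : SMInst (Fin n) (Fin n)} {R : Finset (Fin n × Fin n)}
    (h : appl J R = ∅) : step J R = R := by
  unfold step; split_ifs with h'
  · exact absurd h' (by simp [h])
  · rfl

/-- the run of the deferred-acceptance algorithm: growing set of rejected pairs -/
noncomputable def runR (J : SMInst (Fin n) (Fin n)) (t : ℕ) : Finset (Fin n × Fin n) :=
  (step J)^[t] ∅

lemma runR_succ (J : SMInst (Fin n) (Fin n)) (t : ℕ) :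
    runR J (t + 1) = step J (runR J t) := Function.iterate_succ_apply' _ _ _

lemma runR_mono {J : SMInst (Fin n) (Fin n)} {t t' : ℕ} (h : t ≤ t') :
    runR J t ⊆ runR J t' := by
  induction t' with
  | zero => rw [Nat.le_zero.1 h]
  | succ k ih =>
    rcases Nat.lt_or_ge t (k+1) with h' | h'
    · exact (ih (Nat.lt_succ_iff.1 h')).trans (by rw [runR_succ]; exact step_sub)
    · rw [le_antisymm h h']

lemma runR_stab {J : SMInst (Fin n) (Fin n)} {t : ℕ} (h : appl J (runR J t) = ∅) :
    ∀ k, runR J (t + k) = runR J t := by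
  intro k; induction k with
  | zero => rfl
  | succ k ih =>
    rw [show t + (k + 1) = (t + k) + 1 by omega, runR_succ, ih, step_of_empty h]

lemma terminal_run (J : SMInst (Fin n) (Fin n)) : appl J (runR J (n * n)) = ∅ := by
  by_cases hall : ∀ t, t < n * n → (appl J (runR J t)).Nonempty
  · -- cards grow
    have hcard : ∀ t, t ≤ n * n → t ≤ (runR J t).card := by
      intro t ht; induction t with
      | zero => simp
      | succ k ih =>
        rcases step_cases J (runR J k) with ⟨_, hemp⟩ | ⟨p, _, hpR, hins⟩
        · exact absurd hemp (Finset.nonempty_iff_ne_empty.1 (hall k (Nat.lt_of_succ_le ht)))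
        · have := ih (Nat.le_of_succ_le ht)
          rw [runR_succ, hins, Finset.card_insert_of_notMem hpR]
          omega
    by_contra hne
    obtain ⟨p, hp⟩ := Finset.nonempty_iff_ne_empty.2 hne
    have huniv : (Finset.univ : Finset (Fin n × Fin n)).card = n * n := by
      rw [Finset.card_univ, Fintype.card_prod, Fintype.card_fin]
    have heq : runR J (n * n) = Finset.univ := by
      apply Finset.eq_univ_of_card
      have h1 := hcard (n * n) le_rfl
      have h2 := Finset.card_le_card (Finset.subset_univ (runR J (n * n)))
      rw [huniv] at h2
      simp only [Fintype.card_prod, Fintype.card_fin]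
      omega
    have := (prop_acc (mem_appl.1 hp).1).2
    exact this (by rw [heq]; exact Finset.mem_univ _)
  · push_neg at hall
    obtain ⟨t, ht, hemp⟩ := hall
    have hemp' : appl J (runR J t) = ∅ := hemp
    have : runR J (n * n) = runR J t := by
      have := runR_stab hemp' (n * n - t)
      rwa [Nat.add_sub_cancel' (Nat.le_of_lt ht)] at this
    rw [this]; exact hemp'

/-- the DA matching -/
noncomputable def DA (J : SMInst (Fin n) (Fin n)) : Finset (Fin n × Fin n) :=
  Finset.univ.filter fun p => prop J p.1 (runR J (n * n)) = some p.2

lemma mem_DA {J : SMInst (Fin n) (Fin n)} {p : Fin n × Fin n} :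
    p ∈ DA J ↔ prop J p.1 (runR J (n * n)) = some p.2 := by simp [DA]

lemma term_not_appl {J : SMInst (Fin n) (Fin n)} {p : Fin n × Fin n} :
    p ∉ appl J (runR J (n * n)) := by
  rw [terminal_run J]; exact Finset.notMem_empty _

lemma term_wAcc {J : SMInst (Fin n) (Fin n)} {m w : Fin n}
    (h : prop J m (runR J (n * n)) = some w) : J.wAcc w m := by
  by_contra hc
  exact term_not_appl (p := (m, w)) (mem_appl.2 ⟨h, Or.inl hc⟩)

lemma term_no_better {J : SMInst (Fin n) (Fin n)} {m w m' : Fin n}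
    (h : prop J m (runR J (n * n)) = some w)
    (h' : prop J m' (runR J (n * n)) = some w) (hp : J.wPref w m' m) : False :=
  term_not_appl (p := (m, w)) (mem_appl.2 ⟨h, Or.inr ⟨m', h', hp⟩⟩)

lemma term_unique {J : SMInst (Fin n) (Fin n)} (hW : J.WStrict) {m₁ m₂ w : Fin n}
    (h1 : prop J m₁ (runR J (n * n)) = some w)
    (h2 : prop J m₂ (runR J (n * n)) = some w) : m₁ = m₂ := by
  by_contra hne
  have ha1 : J.wAcc w m₁ := term_wAcc h1
  have ha2 : J.wAcc w m₂ := term_wAcc h2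
  have hrne : wrk J w m₁ ≠ wrk J w m₂ := fun h => hne (wrk_inj hW ha1 ha2 h)
  rcases Nat.lt_or_ge (wrk J w m₁) (wrk J w m₂) with h | h
  · exact term_no_better h2 h1 (wPref_of_wrk ha1 ha2 h)
  · exact term_no_better h1 h2 (wPref_of_wrk ha2 ha1 (lt_of_le_of_ne h (Ne.symm hrne)))

/-- invariant: every rejected man (by an acceptable woman) is dominated by a current proposer -/
def Inv (J : SMInst (Fin n) (Fin n)) (R : Finset (Fin n × Fin n)) : Prop :=
  ∀ m w, (m, w) ∈ R → J.wAcc w m → ∃ m', prop J m' R = some w ∧ J.wPref w m' m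

lemma inv_step {J : SMInst (Fin n) (Fin n)} (hM : J.MStrict) {R : Finset (Fin n × Fin n)}
    (h : Inv J R) : Inv J (step J R) := by
  rcases step_cases J R with ⟨heq, _⟩ | ⟨⟨a, b⟩, hap, hpR, hins⟩
  · rwa [heq]
  · obtain ⟨hprop, hcause⟩ := mem_appl.1 hap
    simp only at hprop hcause
    intro m w hmw hacc
    rw [hins] at hmw
    rcases Finset.mem_insert.1 hmw with hmw | hmw
    · -- (m,w) is the new pair (a,b)
      rw [Prod.mk.injEq] at hmw
      obtain ⟨rfl, rfl⟩ := hmw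
      rcases hcause with hno | ⟨m₂, hm₂, hpref⟩
      · exact absurd hacc hno
      · have hne : m₂ ≠ m := by
          intro hc; rw [hc] at hpref; exact wPref_irrefl hpref
        have hnin : (m₂, w) ∉ insert (m, w) R := by
          rw [Finset.mem_insert]; rintro (hc | hc)
          · exact hne (congrArg Prod.fst hc)
          · exact (prop_acc hm₂).2 hc
        refine ⟨m₂, ?_, hpref⟩
        rw [hins]; exact prop_persist hM (Finset.subset_insert _ _) hm₂ hnin
    · obtain ⟨m₁, hm₁, hpref₁⟩ := h m w hmw hacc
      by_cases hne : (m₁, w) = (a, b)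
      · rw [Prod.mk.injEq] at hne
        obtain ⟨rfl, rfl⟩ := hne
        rcases hcause with hno | ⟨m₂, hm₂, hpref₂⟩
        · exact absurd (wPref_acc hpref₁).1 hno
        · have hne2 : m₂ ≠ m₁ := by
            intro hc; rw [hc] at hpref₂; exact wPref_irrefl hpref₂
          have hnin : (m₂, w) ∉ insert (m₁, w) R := by
            rw [Finset.mem_insert]; rintro (hc | hc)
            · exact hne2 (congrArg Prod.fst hc)
            · exact (prop_acc hm₂).2 hc
          refine ⟨m₂, ?_, wPref_trans hpref₂ hpref₁⟩
          rw [hins]; exact prop_persist hM (Finset.subset_insert _ _) hm₂ hnin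
      · have hnin : (m₁, w) ∉ insert (a, b) R := by
          rw [Finset.mem_insert]; rintro (hc | hc)
          · exact hne hc
          · exact (prop_acc hm₁).2 hc
        refine ⟨m₁, ?_, hpref₁⟩
        rw [hins]; exact prop_persist hM (Finset.subset_insert _ _) hm₁ hnin

lemma inv_run {J : SMInst (Fin n) (Fin n)} (hM : J.MStrict) (t : ℕ) : Inv J (runR J t) := by
  induction t with
  | zero => intro m w hmw; simp [runR] at hmw
  | succ k ih => rw [runR_succ]; exact inv_step hM ih

/-- achievability invariant: rejected pairs belong to no stable matching -/
def InvA (J : SMInst (Fin n) (Fin n)) (R : Finset (Fin n × Fin n)) : Prop :=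
  ∀ m w, (m, w) ∈ R → ∀ ν : Finset (Fin n × Fin n), J.IsStable ν → (m, w) ∉ ν

lemma invA_step {J : SMInst (Fin n) (Fin n)} (hM : J.MStrict) {R : Finset (Fin n × Fin n)}
    (h : InvA J R) : InvA J (step J R) := by
  rcases step_cases J R with ⟨heq, _⟩ | ⟨⟨a, b⟩, hap, hpR, hins⟩
  · rwa [heq]
  · obtain ⟨hprop, hcause⟩ := mem_appl.1 hap
    simp only at hprop hcause
    intro m w hmw ν hν hmem
    rw [hins] at hmw
    rcases Finset.mem_insert.1 hmw with hmw | hmw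
    · rw [Prod.mk.injEq] at hmw
      obtain ⟨rfl, rfl⟩ := hmw
      -- (m,w) = (a,b) newly rejected, but (m,w) ∈ ν stable
      have hwacc : J.wAcc w m := ((hν.1.1 (m, w) hmem).2)
      rcases hcause with hno | ⟨m₂, hm₂, hpref⟩
      · exact hno hwacc
      · -- (m₂, w) blocks ν
        apply hν.2 m₂ w
        refine ⟨(prop_acc hm₂).1, (wPref_acc hpref).1, ?_, Or.inr ⟨m, hmem, hpref⟩⟩
        by_cases hsing : mSingle ν m₂
        · exact Or.inl hsing
        · have : ∃ w₂, (m₂, w₂) ∈ ν := by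
            unfold mSingle at hsing; push_neg at hsing; exact hsing
          obtain ⟨w₂, hw₂⟩ := this
          have haccw₂ : J.mAcc m₂ w₂ := (hν.1.1 (m₂, w₂) hw₂).1
          have hne : w₂ ≠ w := by
            intro hc; rw [hc] at hw₂
            have := hν.1.2.2 (m₂, w) hw₂ (m, w) hmem rfl
            have : m₂ = m := congrArg Prod.fst this
            rw [this] at hpref; exact wPref_irrefl hpref
          rcases Nat.lt_or_ge (rk J m₂ w₂) (rk J m₂ w) with hlt | hge
          · -- w₂ preferred to pointer, so already rejected: contradiction with IH
            have : (m₂, w₂) ∈ R := by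
              by_contra hc
              have : w₂ ∈ Cand J m₂ R := mem_Cand.2 ⟨haccw₂, hc⟩
              exact absurd ((prop_spec hm₂).2 w₂ this) (by omega)
            exact absurd hw₂ (h m₂ w₂ this ν hν)
          · have : rk J m₂ w ≠ rk J m₂ w₂ := by
              intro hc; exact hne (rk_inj hM haccw₂ (prop_acc hm₂).1 hc.symm)
            exact Or.inr ⟨w₂, hw₂, mPref_of_rk (prop_acc hm₂).1 haccw₂ (by omega)⟩
    · exact h m w hmw ν hν hmem

lemma invA_run {J : SMInst (Fin n) (Fin n)} (hM : J.MStrict) (t : ℕ) : InvA J (runR J t) := by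
  induction t with
  | zero => intro m w hmw; simp [runR] at hmw
  | succ k ih => rw [runR_succ]; exact invA_step hM ih

lemma DA_isMatching {J : SMInst (Fin n) (Fin n)} (hM : J.MStrict) (hW : J.WStrict) :
    J.IsMatching (DA J) := by
  refine ⟨?_, ?_, ?_⟩
  · intro p hp
    have := mem_DA.1 hp
    exact ⟨(prop_acc this).1, term_wAcc this⟩
  · intro p hp q hq h1
    have hp' := mem_DA.1 hp
    have hq' := mem_DA.1 hq
    rw [h1] at hp'
    rw [hp'] at hq'
    exact Prod.ext h1 (Option.some_injective _ hq')
  · intro p hp q hq h2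
    have hp' := mem_DA.1 hp
    have hq' := mem_DA.1 hq
    rw [h2] at hp'
    exact Prod.ext (term_unique hW hp' hq') h2

lemma single_DA_prop_none {J : SMInst (Fin n) (Fin n)} {m : Fin n}
    (h : mSingle (DA J) m) : prop J m (runR J (n * n)) = none := by
  cases hp : prop J m (runR J (n * n)) with
  | none => rfl
  | some w' => exact absurd (mem_DA.2 hp) (h w')

lemma rejected_of_better {J : SMInst (Fin n) (Fin n)} {m w w' : Fin n}
    (hp : prop J m (runR J (n * n)) = some w') (hacc : J.mAcc m w)
    (hlt : rk J m w < rk J m w') : (m, w) ∈ runR J (n * n) := by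
  by_contra hc
  have : w ∈ Cand J m (runR J (n * n)) := mem_Cand.2 ⟨hacc, hc⟩
  exact absurd ((prop_spec hp).2 w this) (by omega)

/-- key: the pair (m,w) is rejected in the run whenever m ends up single or worse than w -/
lemma rejected_of_mside {J : SMInst (Fin n) (Fin n)} {m w : Fin n}
    (hacc : J.mAcc m w)
    (hside : mSingle (DA J) m ∨ ∃ w', (m, w') ∈ DA J ∧ J.mPref m w w') :
    (m, w) ∈ runR J (n * n) := by
  rcases hside with hs | ⟨w', hw', hpref⟩
  · exact prop_none (single_DA_prop_none hs) hacc
  · exact rejected_of_better (mem_DA.1 hw') hacc (rk_lt_of_mPref hpref)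

lemma DA_stable {J : SMInst (Fin n) (Fin n)} (hM : J.MStrict) (hW : J.WStrict) :
    J.IsStable (DA J) := by
  refine ⟨DA_isMatching hM hW, ?_⟩
  rintro m w ⟨hma, hwa, hmside, hwside⟩
  have hR : (m, w) ∈ runR J (n * n) := rejected_of_mside hma hmside
  obtain ⟨m', hm', hpref'⟩ := inv_run hM (n * n) m w hR hwa
  have hm'DA : (m', w) ∈ DA J := mem_DA.2 hm'
  rcases hwside with hws | ⟨m'', hm'', hpref''⟩
  · exact hws m' hm'DA
  · have : m'' = m' := by
      have := (DA_isMatching hM hW).2.2 (m'', w) hm'' (m', w) hm'DA rfl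
      exact congrArg Prod.fst this
    rw [this] at hpref''
    exact absurd (wrk_lt_of_wPref (wPref_trans hpref'' hpref')) (lt_irrefl _)

/-- man-optimality: if (m,w) belongs to some stable matching then m's DA partner is
at least as good -/
lemma DA_opt {J : SMInst (Fin n) (Fin n)} (hM : J.MStrict) {ν : Finset (Fin n × Fin n)}
    (hν : J.IsStable ν) {m w : Fin n} (hmw : (m, w) ∈ ν) :
    ∃ w', prop J m (runR J (n * n)) = some w' ∧ rk J m w' ≤ rk J m w := by
  have hnR : (m, w) ∉ runR J (n * n) := fun hc => invA_run hM (n * n) m w hc ν hν hmw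
  have hacc : J.mAcc m w := (hν.1.1 (m, w) hmw).1
  have hw : w ∈ Cand J m (runR J (n * n)) := mem_Cand.2 ⟨hacc, hnR⟩
  obtain ⟨w', hw'⟩ := prop_isSome ⟨w, hw⟩
  exact ⟨w', hw', (prop_spec hw').2 w hw⟩

lemma exists_cause {J : SMInst (Fin n) (Fin n)} {m w : Fin n} {T : ℕ}
    (h : (m, w) ∈ runR J T) :
    ∃ t, t < T ∧ (m, w) ∉ runR J t ∧ (m, w) ∈ appl J (runR J t) := by
  induction T with
  | zero => simp [runR] at h
  | succ k ih =>
    by_cases hk : (m, w) ∈ runR J k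
    · obtain ⟨t, ht, h1, h2⟩ := ih hk
      exact ⟨t, Nat.lt_succ_of_lt ht, h1, h2⟩
    · rw [runR_succ] at h
      rcases step_cases J (runR J k) with ⟨heq, _⟩ | ⟨p, hap, hpR, hins⟩
      · rw [heq] at h; exact absurd h hk
      · rw [hins] at h
        rcases Finset.mem_insert.1 h with h | h
        · rw [h]; exact ⟨k, Nat.lt_succ_self _, (h ▸ hpR), hap⟩
        · exact absurd h hk

/-- The heart of strategy-proofness: if `μ''` is an individually-rational matching
(except possibly man `m`'s acceptability, which is granted for his partner `w`)
admitting no blocking pair whose man is different from `m`, then `m` cannot strictly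
prefer `μ''` to `DA J`. -/
lemma no_better {J : SMInst (Fin n) (Fin n)} (hM : J.MStrict) (hW : J.WStrict)
    (μ'' : Finset (Fin n × Fin n)) (m w : Fin n)
    (hmw : (m, w) ∈ μ'') (hmacc : J.mAcc m w)
    (huniqM : ∀ p ∈ μ'', ∀ q ∈ μ'', p.1 = q.1 → p = q)
    (huniqW : ∀ p ∈ μ'', ∀ q ∈ μ'', p.2 = q.2 → p = q)
    (haccM : ∀ p ∈ μ'', p.1 ≠ m → J.mAcc p.1 p.2)
    (haccW : ∀ p ∈ μ'', J.wAcc p.2 p.1)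
    (hnb : ∀ a b, a ≠ m → ¬ J.Blocks μ'' a b)
    (hbetter : mSingle (DA J) m ∨ ∃ w', (m, w') ∈ DA J ∧ J.mPref m w w') : False := by
  classical
  set N := n * n with hN
  have mAccP : ∀ p ∈ μ'', J.mAcc p.1 p.2 := by
    intro p hp
    by_cases hpm : p.1 = m
    · have : p = (m, w) := huniqM p hp (m, w) hmw hpm
      rw [this]; exact hmacc
    · exact haccM p hp hpm
  set S : Finset (Fin n) := Finset.univ.filter (fun x => ∃ b, (x, b) ∈ μ'' ∧
    (mSingle (DA J) x ∨ ∃ b', (x, b') ∈ DA J ∧ J.mPref x b b')) with hS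
  have mem_S : ∀ x : Fin n, x ∈ S ↔ ∃ b, (x, b) ∈ μ'' ∧
      (mSingle (DA J) x ∨ ∃ b', (x, b') ∈ DA J ∧ J.mPref x b b') := by
    intro x; simp [hS]
  have hmS : m ∈ S := (mem_S m).2 ⟨w, hmw, hbetter⟩
  have step_g : ∀ x, x ∈ S → ∃ x', x' ∈ S ∧ ∃ b, (x, b) ∈ μ'' ∧ (x', b) ∈ DA J := by
    intro x hx
    obtain ⟨b, hbμ, hside⟩ := (mem_S x).1 hx
    have hR : (x, b) ∈ runR J N := rejected_of_mside (mAccP (x, b) hbμ) hside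
    obtain ⟨m', hm'prop, hm'pref⟩ := inv_run hM N x b hR (haccW (x, b) hbμ)
    have hm'DA : (m', b) ∈ DA J := mem_DA.2 hm'prop
    refine ⟨m', ?_, b, hbμ, hm'DA⟩
    by_contra hns
    have hm'nem : m' ≠ m := fun hc => hns (hc ▸ hmS)
    apply hnb m' b hm'nem
    refine ⟨(prop_acc hm'prop).1, (wPref_acc hm'pref).1, ?_, Or.inr ⟨x, hbμ, hm'pref⟩⟩
    by_cases hsing : mSingle μ'' m'
    · exact Or.inl hsing
    · have : ∃ b'', (m', b'') ∈ μ'' := by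
        unfold mSingle at hsing; push_neg at hsing; exact hsing
      obtain ⟨b'', hb''⟩ := this
      have hnoimp : ¬ (mSingle (DA J) m' ∨ ∃ b', (m', b') ∈ DA J ∧ J.mPref m' b'' b') :=
        fun hc => hns ((mem_S m').2 ⟨b'', hb'', hc⟩)
      push_neg at hnoimp
      obtain ⟨-, hnopref⟩ := hnoimp
      have hnop := hnopref b hm'DA
      have haccb'' : J.mAcc m' b'' := mAccP (m', b'') hb''
      have haccb : J.mAcc m' b := (prop_acc hm'prop).1
      have hbne : b ≠ b'' := by
        intro hc
        rw [← hc] at hb''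
        have := huniqW (m', b) hb'' (x, b) hbμ rfl
        have hxm' : m' = x := congrArg Prod.fst this
        rw [hxm'] at hm'pref
        exact wPref_irrefl hm'pref
      have h1 : ¬ rk J m' b'' < rk J m' b := fun hc => hnop (mPref_of_rk haccb'' haccb hc)
      have h2 : rk J m' b ≠ rk J m' b'' := fun hc => hbne (rk_inj hM haccb haccb'' hc)
      exact Or.inr ⟨b'', hb'', mPref_of_rk haccb haccb'' (by omega)⟩
  -- an injective self-map of S, hence surjective
  set f : Fin n → Fin n := fun x =>
    if h : ∃ x', x' ∈ S ∧ ∃ b, (x, b) ∈ μ'' ∧ (x', b) ∈ DA J then h.choose else x with hf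
  have f_spec : ∀ x ∈ S, f x ∈ S ∧ ∃ b, (x, b) ∈ μ'' ∧ (f x, b) ∈ DA J := by
    intro x hx
    have h := step_g x hx
    simp only [hf, dif_pos h]
    exact ⟨h.choose_spec.1, h.choose_spec.2⟩
  have f_injOn : ∀ x ∈ S, ∀ y ∈ S, f x = f y → x = y := by
    intro x hx y hy hxy
    obtain ⟨_, bx, hbx, hbx'⟩ := f_spec x hx
    obtain ⟨_, by', hby, hby'⟩ := f_spec y hy
    rw [hxy] at hbx'
    have hbb : bx = by' := congrArg Prod.snd ((DA_isMatching hM hW).2.1 _ hbx' _ hby' rfl)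
    rw [hbb] at hbx
    exact congrArg Prod.fst (huniqW _ hbx _ hby rfl)
  have himage : Finset.image f S = S := by
    apply Finset.eq_of_subset_of_card_le
    · intro y hy
      obtain ⟨x, hx, rfl⟩ := Finset.mem_image.1 hy
      exact (f_spec x hx).1
    · rw [Finset.card_image_of_injOn
        (fun x hx y hy h => f_injOn x (by simpa using hx) y (by simpa using hy) h)]
  have S_matched : ∀ y ∈ S, ∃ b x, x ∈ S ∧ (x, b) ∈ μ'' ∧ (y, b) ∈ DA J := by
    intro y hy
    obtain ⟨x, hx, hfx⟩ := Finset.mem_image.1 (himage ▸ hy)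
    obtain ⟨_, b, hbμ, hbDA⟩ := f_spec x hx
    exact ⟨b, x, hx, hbμ, hfx ▸ hbDA⟩
  have S_DAmatched : ∀ y ∈ S, ∃ u, (y, u) ∈ DA J := by
    intro y hy
    obtain ⟨b, x, _, _, hbDA⟩ := S_matched y hy
    exact ⟨b, hbDA⟩
  have S_strict : ∀ x ∈ S, ∀ b b', (x, b) ∈ μ'' → (x, b') ∈ DA J → J.mPref x b b' := by
    intro x hx b b' hbμ hb'DA
    obtain ⟨c, hc, hside⟩ := (mem_S x).1 hx
    have hcb : c = b := congrArg Prod.snd (huniqM _ hc _ hbμ rfl)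
    rcases hside with hs | ⟨b'', hb'', hpref⟩
    · exact absurd hb'DA (hs b')
    · have : b'' = b' := congrArg Prod.snd ((DA_isMatching hM hW).2.1 _ hb'' _ hb'DA rfl)
      rw [← this, ← hcb]; exact hpref
  -- arrival times
  have hFex : ∀ x : Fin n, ∃ t, prop J x (runR J t) = prop J x (runR J N) := fun x => ⟨N, rfl⟩
  set F : Fin n → ℕ := fun x => Nat.find (hFex x) with hF
  have F_spec : ∀ x, prop J x (runR J (F x)) = prop J x (runR J N) :=
    fun x => Nat.find_spec (hFex x)
  have F_min : ∀ x t, prop J x (runR J t) = prop J x (runR J N) → F x ≤ t :=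
    fun x t h => Nat.find_min' (hFex x) h
  have before_final : ∀ x u v t, t ≤ N → prop J x (runR J t) = some v →
      prop J x (runR J N) = some u → v ≠ u → t < F x := by
    intro x u v t htN hv hu hne
    by_contra hc
    push_neg at hc
    have h1 : rk J x u ≤ rk J x v := by
      have hFs := F_spec x
      rw [hu] at hFs
      exact prop_rank_mono (runR_mono hc) hFs hv
    have h2 : rk J x v ≤ rk J x u := prop_rank_mono (runR_mono htN) hv hu
    exact hne (rk_inj hM (prop_acc hv).1 (prop_acc hu).1 (le_antisymm h2 h1))
  -- the S-man with the latest arrival at his DA partner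
  obtain ⟨m₀, hm₀S, hmax⟩ := Finset.exists_max_image S F ⟨m, hmS⟩
  obtain ⟨w₀, mbar, hmbarS, hmbarμ, hm₀DA⟩ := S_matched m₀ hm₀S
  have hpropm₀ : prop J m₀ (runR J N) = some w₀ := mem_DA.1 hm₀DA
  -- main downward-closed induction on woman w₀'s ranks
  have main : ∀ r : ℕ, ∀ x, x ∈ S → (x = mbar ∨ J.wPref w₀ x mbar) →
      (x, w₀) ∈ runR J N → wrk J w₀ x = r → False := by
    intro r
    induction r using Nat.strong_induction_on with
    | _ r IH =>
    intro x hxS hrel hxR hr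
    obtain ⟨t, htN, hnotin, happ⟩ := exists_cause hxR
    obtain ⟨hxprop, hcause⟩ := mem_appl.1 happ
    simp only at hxprop hcause
    have hwacc : J.wAcc w₀ x := by
      rcases hrel with rfl | hp
      · exact haccW (x, w₀) hmbarμ
      · exact (wPref_acc hp).1
    rcases hcause with hno | ⟨y, hyprop, hyx⟩
    · exact hno hwacc
    have hrel' : J.wPref w₀ y mbar := by
      rcases hrel with rfl | hp
      · exact hyx
      · exact wPref_trans hyx hp
    have hxne : x ≠ m₀ := by
      intro hc; rw [hc] at hxR; exact (prop_acc hpropm₀).2 hxR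
    obtain ⟨ux, huxDA⟩ := S_DAmatched x hxS
    have hxfin : prop J x (runR J N) = some ux := mem_DA.1 huxDA
    have huxne : ux ≠ w₀ := by
      intro hc; rw [hc] at hxfin; exact hxne (term_unique hW hxfin hpropm₀)
    have htF : t < F m₀ :=
      lt_of_lt_of_le (before_final x ux w₀ t (le_of_lt htN) hxprop hxfin huxne.symm) (hmax x hxS)
    have hyne : y ≠ m₀ := by
      intro hc; subst hc
      have : prop J y (runR J t) = prop J y (runR J N) := by rw [hyprop, hpropm₀]
      have := F_min y t this
      omega
    have hyaccw₀ : J.mAcc y w₀ := (prop_acc hyprop).1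
    cases hyfin : prop J y (runR J N) with
    | none =>
      have hyR : (y, w₀) ∈ runR J N := prop_none hyfin hyaccw₀
      have hysingle : mSingle (DA J) y := by
        intro v hv
        have := mem_DA.1 hv
        rw [hyfin] at this; cases this
      have hynS : y ∉ S := by
        intro hy
        obtain ⟨u, hu⟩ := S_DAmatched y hy
        exact hysingle u hu
      have hynem : y ≠ m := fun hc => hynS (hc ▸ hmS)
      apply hnb y w₀ hynem
      refine ⟨hyaccw₀, (wPref_acc hyx).1, ?_, Or.inr ⟨mbar, hmbarμ, hrel'⟩⟩
      by_cases hsing : mSingle μ'' y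
      · exact Or.inl hsing
      · exfalso
        have : ∃ b'', (y, b'') ∈ μ'' := by
          unfold mSingle at hsing; push_neg at hsing; exact hsing
        obtain ⟨b'', hb''⟩ := this
        exact hynS ((mem_S y).2 ⟨b'', hb'', Or.inl hysingle⟩)
    | some uy =>
      have hyfin' : prop J y (runR J N) = some uy := hyfin
      have huyne : uy ≠ w₀ := fun hc => hyne (term_unique hW (hc ▸ hyfin') hpropm₀)
      have hle : rk J y w₀ ≤ rk J y uy :=
        prop_rank_mono (runR_mono (le_of_lt htN)) hyprop hyfin'
      have hne2 : rk J y w₀ ≠ rk J y uy :=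
        fun hc => huyne (rk_inj hM (prop_acc hyfin').1 hyaccw₀ hc.symm)
      have hrkw₀uy : rk J y w₀ < rk J y uy := by omega
      have hyR : (y, w₀) ∈ runR J N := rejected_of_better hyfin' hyaccw₀ hrkw₀uy
      have hyDA : (y, uy) ∈ DA J := mem_DA.2 hyfin'
      by_cases hyS : y ∈ S
      · exact IH (wrk J w₀ y) (hr ▸ wrk_lt_of_wPref hyx) y hyS (Or.inr hrel') hyR rfl
      · have hynem : y ≠ m := fun hc => hyS (hc ▸ hmS)
        apply hnb y w₀ hynem
        refine ⟨hyaccw₀, (wPref_acc hyx).1, ?_, Or.inr ⟨mbar, hmbarμ, hrel'⟩⟩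
        by_cases hsing : mSingle μ'' y
        · exact Or.inl hsing
        · have : ∃ b'', (y, b'') ∈ μ'' := by
            unfold mSingle at hsing; push_neg at hsing; exact hsing
          obtain ⟨b'', hb''⟩ := this
          have hnoimp : ¬ (mSingle (DA J) y ∨ ∃ b', (y, b') ∈ DA J ∧ J.mPref y b'' b') :=
            fun hc => hyS ((mem_S y).2 ⟨b'', hb'', hc⟩)
          push_neg at hnoimp
          obtain ⟨-, hnopref⟩ := hnoimp
          have hnop := hnopref uy hyDA
          have haccb'' : J.mAcc y b'' := mAccP (y, b'') hb''
          by_cases hbe : b'' = uy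
          · exact Or.inr ⟨b'', hb'', mPref_of_rk hyaccw₀ haccb'' (by rw [hbe]; exact hrkw₀uy)⟩
          · have h1 : ¬ rk J y b'' < rk J y uy :=
              fun hc => hnop (mPref_of_rk haccb'' (prop_acc hyfin').1 hc)
            have h2 : rk J y b'' ≠ rk J y uy :=
              fun hc => hbe (rk_inj hM haccb'' (prop_acc hyfin').1 hc)
            exact Or.inr ⟨b'', hb'', mPref_of_rk hyaccw₀ haccb'' (by omega)⟩
  -- seed the induction with μ''(w₀)
  have hseed : (mbar, w₀) ∈ runR J N := by
    obtain ⟨u, huDA⟩ := S_DAmatched mbar hmbarS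
    have := S_strict mbar hmbarS w₀ u hmbarμ huDA
    exact rejected_of_better (mem_DA.1 huDA) (mAccP (mbar, w₀) hmbarμ) (rk_lt_of_mPref this)
  exact main (wrk J w₀ mbar) mbar hmbarS (Or.inl rfl) hseed rfl

/-- Strategy-proofness for strict instances: if `J'` differs from (fully strict) `J`
only in man `m`'s list and is itself strict on men's side, then `m` cannot prefer
`DA J'` to `DA J` with respect to his list in `J`. -/
lemma no_manip {J J' : SMInst (Fin n) (Fin n)} (hM : J.MStrict) (hW : J.WStrict)
    (hM' : J'.MStrict) (m : Fin n) (hd : J.mDiffOnly J' m) (w : Fin n)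
    (hw : (m, w) ∈ DA J') (hmacc : J.mAcc m w)
    (hside : mSingle (DA J) m ∨ ∃ w', (m, w') ∈ DA J ∧ J.mPref m w w') : False := by
  classical
  have hW' : J'.WStrict := by
    intro w1 m1 m2 h hacc
    refine hW w1 m1 m2 ?_ ?_
    · rw [hd.1]; exact h
    · unfold SMInst.wAcc; rw [hd.1]; exact hacc
  -- J'': m reports only w, everyone else as in J
  set J'' : SMInst (Fin n) (Fin n) :=
    ⟨fun a b => if a = m then (if b = w then some 0 else none) else J.mpref a b,
     J.wpref⟩ with hJ''
  have hmpref_m : ∀ b : Fin n, J''.mpref m b = if b = w then some 0 else none := by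
    intro b; simp [hJ'']
  have hmpref_ne : ∀ a : Fin n, a ≠ m → J''.mpref a = J.mpref a := by
    intro a ha; funext b; simp [hJ'', ha]
  have hmpref_ne' : ∀ a : Fin n, a ≠ m → J''.mpref a = J'.mpref a := by
    intro a ha; rw [hmpref_ne a ha]; exact hd.2 a ha
  have hwpref'' : J''.wpref = J.wpref := rfl
  have hwpref' : J''.wpref = J'.wpref := by rw [hwpref'']; exact hd.1
  have hM'' : J''.MStrict := by
    intro a b b' heq hacc
    by_cases ha : a = m
    · subst ha
      rw [hmpref_m b, hmpref_m b'] at heq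
      unfold SMInst.mAcc at hacc
      rw [hmpref_m b] at hacc
      by_cases hb : b = w
      · rw [if_pos hb] at heq
        by_cases hb' : b' = w
        · rw [hb, hb']
        · rw [if_neg hb'] at heq; cases heq
      · rw [if_neg hb] at hacc; simp at hacc
    · rw [hmpref_ne a ha] at heq
      unfold SMInst.mAcc at hacc
      rw [hmpref_ne a ha] at hacc
      exact hM a b b' heq hacc
  have hW'' : J''.WStrict := hW
  have hacc''mw : J''.mAcc m w := by
    unfold SMInst.mAcc; rw [hmpref_m w, if_pos rfl]; rfl
  -- the matching DA J' is stable in J''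
  have hstJ' := DA_stable hM' hW'
  have hmuniq := hstJ'.1.2.1
  have hstable'' : J''.IsStable (DA J') := by
    constructor
    · refine ⟨?_, hstJ'.1.2.1, hstJ'.1.2.2⟩
      intro p hp
      have hacc := hstJ'.1.1 p hp
      constructor
      · by_cases hpm : p.1 = m
        · have hpw : p = (m, w) := hmuniq p hp (m, w) hw hpm
          rw [hpw]; exact hacc''mw
        · unfold SMInst.mAcc; rw [hmpref_ne' p.1 hpm]; exact hacc.1
      · unfold SMInst.wAcc; rw [hwpref']; exact hacc.2
    · rintro a b ⟨hma, hwa, hmside, hwside⟩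
      by_cases ham : a = m
      · subst ham
        have hbw : b = w := by
          unfold SMInst.mAcc at hma
          rw [hmpref_m b] at hma
          by_contra hc
          rw [if_neg hc] at hma; simp at hma
        subst hbw
        rcases hmside with hs | ⟨w', hw', hpref⟩
        · exact hs _ hw
        · have : w' = b := congrArg Prod.snd (hmuniq (a, w') hw' (a, b) hw rfl)
          rw [this] at hpref
          exact mPref_irrefl hpref
      · apply hstJ'.2 a b
        refine ⟨?_, ?_, ?_, ?_⟩
        · unfold SMInst.mAcc at hma ⊢; rwa [hmpref_ne' a ham] at hma
        · unfold SMInst.wAcc at hwa ⊢; rwa [hwpref'] at hwa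
        · rcases hmside with hs | ⟨w', hw', hpref⟩
          · exact Or.inl hs
          · refine Or.inr ⟨w', hw', ?_⟩
            unfold SMInst.mPref at hpref ⊢; rwa [hmpref_ne' a ham] at hpref
        · rcases hwside with hs | ⟨m', hm', hpref⟩
          · exact Or.inl hs
          · refine Or.inr ⟨m', hm', ?_⟩
            unfold SMInst.wPref at hpref ⊢; rwa [hwpref'] at hpref
  -- hence DA J'' matches m with w
  have hmw'' : (m, w) ∈ DA J'' := by
    obtain ⟨w', hw', _⟩ := DA_opt hM'' hstable'' hw
    have : J''.mAcc m w' := (prop_acc hw').1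
    unfold SMInst.mAcc at this
    rw [hmpref_m w'] at this
    by_cases hc : w' = w
    · rw [hc] at hw'; exact mem_DA.2 hw'
    · rw [if_neg hc] at this; simp at this
  -- apply the key lemma in instance J with μ'' := DA J''
  have hst'' := DA_stable hM'' hW''
  refine no_better hM hW (DA J'') m w hmw'' hmacc hst''.1.2.1 hst''.1.2.2 ?_ ?_ ?_ hside
  · intro p hp hpm
    have := (hst''.1.1 p hp).1
    unfold SMInst.mAcc at this ⊢
    rwa [hmpref_ne p.1 hpm] at this
  · intro p hp
    exact (hst''.1.1 p hp).2
  · rintro a b ha ⟨hma, hwa, hmside, hwside⟩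
    apply hst''.2 a b
    refine ⟨?_, ?_, ?_, ?_⟩
    · unfold SMInst.mAcc at hma ⊢
      rw [hmpref_ne a ha]; exact hma
    · exact hwa
    · rcases hmside with hs | ⟨w', hw', hpref⟩
      · exact Or.inl hs
      · refine Or.inr ⟨w', hw', ?_⟩
        unfold SMInst.mPref at hpref ⊢
        rw [hmpref_ne a ha]; exact hpref
    · exact hwside

/-- tie-breaking: refine ranks lexicographically by the partner's index -/
noncomputable def tb (I : SMInst (Fin n) (Fin n)) : SMInst (Fin n) (Fin n) :=
  ⟨fun m w => (I.mpref m w).map (fun r => n * r + w.val),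
   fun w m => (I.wpref w m).map (fun r => n * r + m.val)⟩

lemma encode_lt {r r' : ℕ} {v v' : Fin n} (h : r < r') : n * r + v.val < n * r' + v'.val := by
  have hv : v.val < n := v.isLt
  have h1 : n * r + v.val < n * (r + 1) := by rw [Nat.mul_succ]; omega
  have h2 : n * (r + 1) ≤ n * r' := Nat.mul_le_mul_left n h
  omega

lemma encode_inj {r r' : ℕ} {v v' : Fin n} (h : n * r + v.val = n * r' + v'.val) :
    r = r' ∧ v = v' := by
  have : r = r' := by
    rcases lt_trichotomy r r' with hc | hc | hc
    · exact absurd h (Nat.ne_of_lt (encode_lt hc))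
    · exact hc
    · exact absurd h.symm (Nat.ne_of_lt (encode_lt hc))
  subst this
  refine ⟨rfl, Fin.ext ?_⟩
  omega

lemma tb_mAcc {I : SMInst (Fin n) (Fin n)} {m w : Fin n} :
    (tb I).mAcc m w ↔ I.mAcc m w := by
  unfold SMInst.mAcc tb
  simp

lemma tb_wAcc {I : SMInst (Fin n) (Fin n)} {w m : Fin n} :
    (tb I).wAcc w m ↔ I.wAcc w m := by
  unfold SMInst.wAcc tb
  simp

lemma tb_mPref {I : SMInst (Fin n) (Fin n)} {m a b : Fin n} (h : I.mPref m a b) :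
    (tb I).mPref m a b := by
  obtain ⟨r, r', h1, h2, h3⟩ := h
  exact ⟨n * r + a.val, n * r' + b.val, by simp [tb, h1], by simp [tb, h2], encode_lt h3⟩

lemma tb_wPref {I : SMInst (Fin n) (Fin n)} {w a b : Fin n} (h : I.wPref w a b) :
    (tb I).wPref w a b := by
  obtain ⟨r, r', h1, h2, h3⟩ := h
  exact ⟨n * r + a.val, n * r' + b.val, by simp [tb, h1], by simp [tb, h2], encode_lt h3⟩

lemma tb_MStrict (I : SMInst (Fin n) (Fin n)) : (tb I).MStrict := by
  intro m w w' heq hacc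
  have hacc' : I.mAcc m w := tb_mAcc.1 hacc
  obtain ⟨r, hr⟩ := mAcc_iff.1 hacc'
  have h1 : (tb I).mpref m w = some (n * r + w.val) := by simp [tb, hr]
  rw [h1] at heq
  cases hx : I.mpref m w' with
  | none => rw [show (tb I).mpref m w' = none by simp [tb, hx]] at heq; cases heq
  | some r' =>
    rw [show (tb I).mpref m w' = some (n * r' + w'.val) by simp [tb, hx]] at heq
    exact (encode_inj (Option.some_injective _ heq.symm)).2.symm

lemma tb_WStrict (I : SMInst (Fin n) (Fin n)) : (tb I).WStrict := by
  intro w m m' heq hacc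
  have hacc' : I.wAcc w m := tb_wAcc.1 hacc
  obtain ⟨r, hr⟩ := wAcc_iff.1 hacc'
  have h1 : (tb I).wpref w m = some (n * r + m.val) := by simp [tb, hr]
  rw [h1] at heq
  cases hx : I.wpref w m' with
  | none => rw [show (tb I).wpref w m' = none by simp [tb, hx]] at heq; cases heq
  | some r' =>
    rw [show (tb I).wpref w m' = some (n * r' + m'.val) by simp [tb, hx]] at heq
    exact (encode_inj (Option.some_injective _ heq.symm)).2.symm

lemma tb_stable {I : SMInst (Fin n) (Fin n)} {M : Finset (Fin n × Fin n)}
    (h : (tb I).IsStable M) : I.IsStable M := by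
  constructor
  · refine ⟨?_, h.1.2.1, h.1.2.2⟩
    intro p hp
    have := h.1.1 p hp
    exact ⟨tb_mAcc.1 this.1, tb_wAcc.1 this.2⟩
  · rintro a b ⟨hma, hwa, hmside, hwside⟩
    apply h.2 a b
    refine ⟨tb_mAcc.2 hma, tb_wAcc.2 hwa, ?_, ?_⟩
    · rcases hmside with hs | ⟨w', hw', hp⟩
      · exact Or.inl hs
      · exact Or.inr ⟨w', hw', tb_mPref hp⟩
    · rcases hwside with hs | ⟨m', hm', hp⟩
      · exact Or.inl hs
      · exact Or.inr ⟨m', hm', tb_wPref hp⟩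

/-- any two stable matchings (indeed, maximal matchings) are within a factor 2 in size -/
lemma two_approx {I : SMInst (Fin n) (Fin n)} {M Mopt : Finset (Fin n × Fin n)}
    (hMst : I.IsStable M) (hO : I.IsStable Mopt) : Mopt.card ≤ 2 * M.card := by
  classical
  set φ : Fin n × Fin n → Fin n × Fin n := fun p =>
    if h : ∃ q ∈ M, q.1 = p.1 ∨ q.2 = p.2 then h.choose else p with hφ
  have hexists : ∀ p ∈ Mopt, ∃ q ∈ M, q.1 = p.1 ∨ q.2 = p.2 := by
    intro p hp
    by_contra hc
    push_neg at hc
    apply hMst.2 p.1 p.2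
    have hacc := hO.1.1 p hp
    refine ⟨hacc.1, hacc.2, Or.inl ?_, Or.inl ?_⟩
    · intro v hv; exact (hc (p.1, v) hv).1 rfl
    · intro u hu; exact (hc (u, p.2) hu).2 rfl
  have hmaps : ∀ p ∈ Mopt, φ p ∈ M := by
    intro p hp
    have hex := hexists p hp
    simp only [hφ, dif_pos hex]
    exact hex.choose_spec.1
  have hshare : ∀ p ∈ Mopt, (φ p).1 = p.1 ∨ (φ p).2 = p.2 := by
    intro p hp
    have hex := hexists p hp
    simp only [hφ, dif_pos hex]
    exact hex.choose_spec.2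
  have := Finset.card_le_mul_card_image_of_maps_to hmaps 2 ?_
  · exact this
  · intro b hb
    have hsub : (Mopt.filter fun a => φ a = b) ⊆
        (Mopt.filter fun a => a.1 = b.1) ∪ (Mopt.filter fun a => a.2 = b.2) := by
      intro p hp
      obtain ⟨hpM, hpb⟩ := Finset.mem_filter.1 hp
      rcases hshare p hpM with h1 | h1
      · exact Finset.mem_union_left _ (Finset.mem_filter.2 ⟨hpM, by rw [← hpb, h1]⟩)
      · exact Finset.mem_union_right _ (Finset.mem_filter.2 ⟨hpM, by rw [← hpb, h1]⟩)
    have h1 : (Mopt.filter fun a => a.1 = b.1).card ≤ 1 := by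
      apply Finset.card_le_one.2
      intro p hp q hq
      obtain ⟨hpM, hp1⟩ := Finset.mem_filter.1 hp
      obtain ⟨hqM, hq1⟩ := Finset.mem_filter.1 hq
      exact hO.1.2.1 p hpM q hqM (by rw [hp1, hq1])
    have h2 : (Mopt.filter fun a => a.2 = b.2).card ≤ 1 := by
      apply Finset.card_le_one.2
      intro p hp q hq
      obtain ⟨hpM, hp1⟩ := Finset.mem_filter.1 hp
      obtain ⟨hqM, hq1⟩ := Finset.mem_filter.1 hq
      exact hO.1.2.2 p hpM q hqM (by rw [hp1, hq1])
    calc (Mopt.filter fun a => φ a = b).card ≤ _ := Finset.card_le_card hsub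
    _ ≤ _ := Finset.card_union_le _ _
    _ ≤ 2 := by omega

lemma tb_diffOnly {I I' : SMInst (Fin n) (Fin n)} {m : Fin n} (h : I.mDiffOnly I' m) :
    (tb I).mDiffOnly (tb I') m := by
  constructor
  · show (fun w a => (I.wpref w a).map _) = (fun w a => (I'.wpref w a).map _)
    rw [h.1]
  · intro m' hm'
    show (fun w => (I.mpref m' w).map _) = (fun w => (I'.mpref m' w).map _)
    rw [h.2 m' hm']

end DAproof

/-- MAX SMTI admits a man-strategy-proof 2-approximate-stable mechanism. -/
theorem man_sp_two_approx_stable_mechanism_SMTI :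
    ∃ S : ∀ n : ℕ, SMInst (Fin n) (Fin n) → Finset (Fin n × Fin n),
      (∀ (n : ℕ) (I : SMInst (Fin n) (Fin n)),
          I.IsStable (S n I) ∧
          ∀ Mopt : Finset (Fin n × Fin n), I.IsStable Mopt →
            Mopt.card ≤ 2 * (S n I).card) ∧
      ¬ ∃ (n : ℕ) (I I' : SMInst (Fin n) (Fin n)) (m : Fin n),
          SMInst.mDiffOnly I I' m ∧ I.mPrefMatching m (S n I') (S n I) := by
  classical
  refine ⟨fun n I => DAproof.DA (DAproof.tb I), ?_, ?_⟩
  · intro n I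
    have hst : I.IsStable (DAproof.DA (DAproof.tb I)) :=
      DAproof.tb_stable (DAproof.DA_stable (DAproof.tb_MStrict I) (DAproof.tb_WStrict I))
    exact ⟨hst, fun Mopt hMopt => DAproof.two_approx hst hMopt⟩
  · rintro ⟨n, I, I', m, hdiff, w, hwS', hmacc, hside⟩
    apply DAproof.no_manip (DAproof.tb_MStrict I) (DAproof.tb_WStrict I)
      (DAproof.tb_MStrict I') m (DAproof.tb_diffOnly hdiff) w hwS'
      (DAproof.tb_mAcc.2 hmacc)
    rcases hside with hs | ⟨w', hw', hp⟩
    · exact Or.inl hs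
    · exact Or.inr ⟨w', hw', DAproof.tb_mPref hp⟩
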